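/- If G is a graph on n vertices having at least log₂(n) − 1 universal vertices, then the domination polynomial of G is unimodal with a mode at ⌈n/2⌉ or ⌈n/2⌉+1. -/

import Mathlib

/-- A finite set of vertices dominates the graph. -/
def Dominates {V : Type*} (G : SimpleGraph V) (U : Finset V) : Prop :=
  ∀ v : V, v ∈ U ∨ ∃ u ∈ U, G.Adj u v

/-- The number of dominating sets of size `i`. -/
noncomputable def domCount {V : Type*} [Fintype V] (G : SimpleGraph V) (i : ℕ) : ℕ :=
  Nat.card {U : Finset V // U.card = i ∧ Dominates G U}

/-- The number of universal vertices of `G`, i.e. vertices adjacent to every other vertex. -/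
noncomputable def universalCount {V : Type*} [Fintype V] (G : SimpleGraph V) : ℕ :=
  Nat.card {v : V // ∀ u : V, u ≠ v → G.Adj v u}

/-- The coefficient sequence is non-decreasing up to `k` and non-increasing afterwards,
so in particular `k` is a mode. -/
def UnimodalWithMode (d : ℕ → ℕ) (k : ℕ) : Prop :=
  (∀ i < k, d i ≤ d (i + 1)) ∧ (∀ i, k ≤ i → d (i + 1) ≤ d i)

open Finset

section Aux

variable {V : Type*} [Fintype V] (G : SimpleGraph V)

omit [Fintype V] in
private lemma dominates_mono {U W : Finset V} (hUW : U ⊆ W) (h : Dominates G U) :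
    Dominates G W := fun v =>
  (h v).imp (fun hv => hUW hv) (fun ⟨u, hu, ha⟩ => ⟨u, hUW hu, ha⟩)

open Classical in
private lemma domCount_eq (i : ℕ) :
    domCount G i = #(univ.filter fun U : Finset V => U.card = i ∧ Dominates G U) := by
  rw [domCount, Nat.card_eq_fintype_card, Fintype.card_subtype]

open Classical in
private lemma universalCount_eq :
    universalCount G = #(univ.filter fun v : V => ∀ u : V, u ≠ v → G.Adj v u) := by
  rw [universalCount, Nat.card_eq_fintype_card, Fintype.card_subtype]

private lemma card_filter_card_eq (j : ℕ) :
    #(univ.filter fun U : Finset V => U.card = j) = (Fintype.card V).choose j := by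
  classical
  have h1 : (univ : Finset V).powersetCard j = univ.filter fun U : Finset V => U.card = j := by
    rw [powersetCard_eq_filter, powerset_univ]
  rw [← h1, card_powersetCard, card_univ]

private lemma domCount_eq_zero (i : ℕ) (hi : Fintype.card V < i) : domCount G i = 0 := by
  classical
  rw [domCount_eq, Finset.card_eq_zero, Finset.filter_eq_empty_iff]
  intro U _ hU
  have := U.card_le_univ
  rw [hU.1] at this
  omega

/-- Alikhani–Peng: the number of dominating sets increases below `n/2`. -/
private lemma domCount_le_succ (i : ℕ) (hi : 2 * i + 1 ≤ Fintype.card V) :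
    domCount G i ≤ domCount G (i + 1) := by
  classical
  rw [domCount_eq, domCount_eq]
  set n := Fintype.card V with hn
  set s := univ.filter fun U : Finset V => U.card = i ∧ Dominates G U with hs
  set t := univ.filter fun U : Finset V => U.card = i + 1 ∧ Dominates G U with ht
  have key : #s * (n - i) ≤ #t * (i + 1) := by
    apply Finset.card_mul_le_card_mul (fun U W => U ⊆ W)
    · intro U hU
      simp only [hs, mem_filter, mem_univ, true_and] at hU
      have hinj : Set.InjOn (fun v => insert v U) (Uᶜ : Finset V) := by
        intro a ha b hb hab
        simp only [Finset.coe_compl, Set.mem_compl_iff, Finset.mem_coe] at ha hb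
        have hab' : insert a U = insert b U := hab
        have : a ∈ insert b U := by rw [← hab']; exact mem_insert_self _ _
        rcases mem_insert.1 this with h | h
        · exact h
        · exact absurd h ha
      have himg : (Uᶜ.image fun v => insert v U) ⊆ t.bipartiteAbove (· ⊆ ·) U := by
        intro W hW
        simp only [mem_image, mem_compl] at hW
        obtain ⟨v, hv, rfl⟩ := hW
        simp only [Finset.bipartiteAbove, mem_filter, ht, mem_univ, true_and]
        exact ⟨⟨by rw [card_insert_of_notMem hv, hU.1],
          dominates_mono G (subset_insert _ _) hU.2⟩, subset_insert _ _⟩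
      calc n - i = #(Uᶜ) := by rw [card_compl, hU.1]
        _ = #(Uᶜ.image fun v => insert v U) := (card_image_of_injOn hinj).symm
        _ ≤ _ := card_le_card himg
    · intro W hW
      simp only [ht, mem_filter, mem_univ, true_and] at hW
      have hsub : s.bipartiteBelow (· ⊆ ·) W ⊆ W.powersetCard i := by
        intro U hU
        simp only [Finset.bipartiteBelow, hs, mem_filter, mem_univ, true_and] at hU
        exact mem_powersetCard.2 ⟨hU.2, hU.1.1⟩
      calc #(s.bipartiteBelow (· ⊆ ·) W) ≤ #(W.powersetCard i) := card_le_card hsub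
        _ = (i + 1).choose i := by rw [card_powersetCard, hW.1]
        _ = i + 1 := Nat.choose_succ_self_right i
  have h2 : #s * (n - i) ≤ #t * (n - i) :=
    key.trans (Nat.mul_le_mul_left _ (by omega))
  exact Nat.le_of_mul_le_mul_right h2 (by omega)

end Aux

private lemma two_pow_mul_choose_le (m : ℕ) : ∀ r : ℕ,
    2 ^ m * r.choose m ≤ (2 * r + 1).choose m := by
  induction m with
  | zero => intro r; simp
  | succ m ih =>
    intro r
    rcases lt_or_ge r (m + 1) with h | h
    · rw [Nat.choose_eq_zero_of_lt h]; simp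
    · have hmul : (2 ^ (m + 1) * r.choose (m + 1)) * (m + 1) ≤
          ((2 * r + 1).choose (m + 1)) * (m + 1) := by
        have e1 : r.choose (m + 1) * (m + 1) = r.choose m * (r - m) :=
          Nat.choose_succ_right_eq r m
        have e2 : (2 * r + 1).choose (m + 1) * (m + 1) =
            (2 * r + 1).choose m * (2 * r + 1 - m) := Nat.choose_succ_right_eq _ m
        calc (2 ^ (m + 1) * r.choose (m + 1)) * (m + 1)
            = (2 ^ m * r.choose m) * (2 * (r - m)) := by
              rw [mul_assoc, e1, pow_succ]; ring
          _ ≤ (2 * r + 1).choose m * (2 * r + 1 - m) :=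
              Nat.mul_le_mul (ih r) (by omega)
          _ = ((2 * r + 1).choose (m + 1)) * (m + 1) := e2.symm
      exact Nat.le_of_mul_le_mul_right hmul (by omega)

private lemma choose_id (n m i : ℕ) (hmn : m ≤ n) (hin : i ≤ n) :
    n.choose i * (n - i).choose m = n.choose m * (n - m).choose i := by
  rcases le_or_gt (i + m) n with h | h
  · have h1 := Nat.choose_mul (n := n) (k := i + m) (s := i) (Nat.le_add_right _ _)
    have h2 := Nat.choose_mul (n := n) (k := i + m) (s := m) (Nat.le_add_left _ _)
    rw [Nat.add_sub_cancel_left] at h1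
    rw [Nat.add_sub_cancel] at h2
    have h3 : (i + m).choose i = (i + m).choose m := by
      have := Nat.choose_symm (n := i + m) (k := i) (Nat.le_add_right _ _)
      rw [Nat.add_sub_cancel_left] at this
      exact this.symm
    rw [← h1, ← h2, h3]
  · rw [Nat.choose_eq_zero_of_lt (by omega : n - i < m),
      Nat.choose_eq_zero_of_lt (by omega : n - m < i)]
    simp

private lemma arith_key (n m i : ℕ) (hn : n ≤ 2 ^ (m + 1)) (h1 : n + 2 ≤ 2 * i)
    (h2 : i < n) : (n - i).choose m * (i + 1) ≤ n.choose m * (2 * i + 1 - n) := by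
  have key : 2 ^ m * (n - i).choose m ≤ n.choose m :=
    (two_pow_mul_choose_le m (n - i)).trans (Nat.choose_le_choose m (by omega))
  have hpow : n ≤ 2 * 2 ^ m := by rw [← pow_succ']; exact hn
  have h3 : i + 1 ≤ 3 * 2 ^ m := by
    have : 0 < 2 ^ m := Nat.pow_pos (n := m) (by omega)
    omega
  calc (n - i).choose m * (i + 1) ≤ (n - i).choose m * (3 * 2 ^ m) :=
        Nat.mul_le_mul_left _ h3
    _ = 3 * (2 ^ m * (n - i).choose m) := by ring
    _ ≤ 3 * n.choose m := Nat.mul_le_mul_left _ key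
    _ ≤ n.choose m * (2 * i + 1 - n) := by
        rw [mul_comm]
        exact Nat.mul_le_mul_left _ (by omega)

private lemma choose_ineq (n m i : ℕ) (hmn : m ≤ n) (hn : n ≤ 2 ^ (m + 1))
    (h1 : n + 2 ≤ 2 * i) (h2 : i < n) :
    n.choose (i + 1) + (n - m).choose i ≤ n.choose i := by
  have key := arith_key n m i hn h1 h2
  have id1 := choose_id n m i hmn (le_of_lt h2)
  have e1 : n.choose (i + 1) * (i + 1) = n.choose i * (n - i) :=
    Nat.choose_succ_right_eq n i
  have hpos : 0 < (i + 1) * n.choose m :=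
    Nat.mul_pos (by omega) (Nat.choose_pos hmn)
  have hA : n.choose (i + 1) * ((i + 1) * n.choose m) =
      n.choose i * n.choose m * (n - i) := by
    rw [← mul_assoc, e1]; ring
  have hB : (n - m).choose i * ((i + 1) * n.choose m) ≤
      n.choose i * n.choose m * (2 * i + 1 - n) := by
    calc (n - m).choose i * ((i + 1) * n.choose m)
        = n.choose m * (n - m).choose i * (i + 1) := by ring
      _ = n.choose i * ((n - i).choose m * (i + 1)) := by rw [← id1]; ring
      _ ≤ n.choose i * (n.choose m * (2 * i + 1 - n)) := Nat.mul_le_mul_left _ key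
      _ = n.choose i * n.choose m * (2 * i + 1 - n) := by ring
  have hsum : (n.choose (i + 1) + (n - m).choose i) * ((i + 1) * n.choose m) ≤
      n.choose i * ((i + 1) * n.choose m) := by
    have hsplit : n - i + (2 * i + 1 - n) = i + 1 := by omega
    calc (n.choose (i + 1) + (n - m).choose i) * ((i + 1) * n.choose m)
        = n.choose (i + 1) * ((i + 1) * n.choose m) +
          (n - m).choose i * ((i + 1) * n.choose m) := add_mul _ _ _
      _ ≤ n.choose i * n.choose m * (n - i) +
          n.choose i * n.choose m * (2 * i + 1 - n) := by
          rw [hA]; exact Nat.add_le_add_left hB _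
      _ = n.choose i * n.choose m * (n - i + (2 * i + 1 - n)) := by rw [mul_add]
      _ = n.choose i * ((i + 1) * n.choose m) := by rw [hsplit]; ring
  exact Nat.le_of_mul_le_mul_right hsum hpos

section Aux2

variable {V : Type*} [Fintype V] (G : SimpleGraph V)

private lemma succ_domCount_le (i : ℕ)
    (hm : Fintype.card V ≤ 2 ^ (universalCount G + 1))
    (h1 : Fintype.card V + 2 ≤ 2 * i) (h2 : i < Fintype.card V) :
    domCount G (i + 1) ≤ domCount G i := by
  classical
  set n := Fintype.card V with hn
  set m := universalCount G with hmdef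
  set A := univ.filter fun v : V => ∀ u : V, u ≠ v → G.Adj v u with hA
  have hAm : #A = m := (universalCount_eq G).symm
  have hmn : m ≤ n := by
    rw [← hAm, hA]
    exact (card_filter_le _ _).trans (le_of_eq card_univ)
  -- (a) upper bound for domCount (i+1)
  have ha : domCount G (i + 1) ≤ n.choose (i + 1) := by
    rw [domCount_eq, ← card_filter_card_eq (V := V) (i + 1)]
    exact card_le_card (monotone_filter_right _ (fun U _ hU => hU.1))
  -- (b) d_i + c_i = choose n i
  have hb : domCount G i +
      #(univ.filter fun U : Finset V => U.card = i ∧ ¬ Dominates G U) = n.choose i := by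
    rw [domCount_eq, ← card_filter_card_eq (V := V) i]
    rw [show (univ.filter fun U : Finset V => U.card = i ∧ Dominates G U)
        = (univ.filter fun U : Finset V => U.card = i).filter (fun U => Dominates G U) from by
        rw [filter_filter],
      show (univ.filter fun U : Finset V => U.card = i ∧ ¬ Dominates G U)
        = (univ.filter fun U : Finset V => U.card = i).filter (fun U => ¬ Dominates G U) from by
        rw [filter_filter]]
    exact card_filter_add_card_filter_not _
  -- (c) c_i ≤ choose (n - m) i
  have hc : #(univ.filter fun U : Finset V => U.card = i ∧ ¬ Dominates G U) ≤
      (n - m).choose i := by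
    have hsub : (univ.filter fun U : Finset V => U.card = i ∧ ¬ Dominates G U) ⊆
        Aᶜ.powersetCard i := by
      intro U hU
      simp only [mem_filter, mem_univ, true_and] at hU
      refine mem_powersetCard.2 ⟨?_, hU.1⟩
      intro v hv
      rw [mem_compl]
      intro hvA
      simp only [hA, mem_filter, mem_univ, true_and] at hvA
      exact hU.2 fun u => by
        by_cases hu : u = v
        · exact Or.inl (hu ▸ hv)
        · exact Or.inr ⟨v, hv, hvA u hu⟩
    calc _ ≤ #(Aᶜ.powersetCard i) := card_le_card hsub
      _ = (n - m).choose i := by rw [card_powersetCard, card_compl, hAm]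
  have hd := choose_ineq n m i hmn hm h1 h2
  omega

end Aux2

theorem unimodal_of_many_universal {V : Type*} [Fintype V] (G : SimpleGraph V)
    (h : Real.logb 2 (Fintype.card V) - 1 ≤ (universalCount G : ℝ)) :
    UnimodalWithMode (domCount G) ((Fintype.card V + 1) / 2) ∨
      UnimodalWithMode (domCount G) ((Fintype.card V + 1) / 2 + 1) := by
  classical
  set n := Fintype.card V with hn
  set m := universalCount G with hm
  set k := (n + 1) / 2 with hk
  have hnm : n ≤ 2 ^ (m + 1) := by
    rcases Nat.eq_zero_or_pos n with h0 | h0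
    · rw [h0]; exact Nat.zero_le _
    · have hlog : Real.logb 2 n ≤ (m : ℝ) + 1 := by linarith
      have hle : (n : ℝ) ≤ (2 : ℝ) ^ ((m : ℝ) + 1) :=
        (Real.logb_le_iff_le_rpow (by norm_num) (by exact_mod_cast h0)).1 hlog
      have : (n : ℝ) ≤ ((2 ^ (m + 1) : ℕ) : ℝ) := by
        rw [show ((m : ℝ) + 1) = ((m + 1 : ℕ) : ℝ) by push_cast; ring,
          Real.rpow_natCast] at hle
        exact_mod_cast hle
      exact_mod_cast this
  have inc : ∀ i < k, domCount G i ≤ domCount G (i + 1) := by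
    intro i hi
    exact domCount_le_succ G i (by omega)
  have dec : ∀ i, k + 1 ≤ i → domCount G (i + 1) ≤ domCount G i := by
    intro i hi
    rcases lt_or_ge i n with h2 | h2
    · exact succ_domCount_le G i hnm (by omega) h2
    · rw [domCount_eq_zero G (i + 1) (by omega)]
      exact Nat.zero_le _
  rcases le_or_gt (domCount G (k + 1)) (domCount G k) with hkk | hkk
  · left
    refine ⟨inc, fun i hi => ?_⟩
    rcases eq_or_lt_of_le hi with rfl | hlt
    · exact hkk
    · exact dec i (by omega)
  · right
    refine ⟨fun i hi => ?_, dec⟩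
    rcases Nat.lt_succ_iff_lt_or_eq.1 hi with hlt | rfl
    · exact inc i hlt
    · exact hkk.le
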